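/- Fix r_1 < ... < r_k, let d = gcd(r_1,...,r_k), and fix n > r_k² such that M_n = ⟨n, n+r_1,...,n+r_k⟩ is primitive. If β is a Betti element of M_n and z, z' are factorizations of β lying in different connected components of the factorization graph ∇_β, then | |z| − |z'| | ∈ {0, d}. -/

import Mathlib

open Finset

/-- Length of a factorization. -/
def vlen {m : ℕ} (z : Fin m → ℕ) : ℕ := ∑ i, z i

/-- Factorization homomorphism of `M_n = ⟨n, n+r_1, ..., n+r_k⟩`. -/
def piM (k n : ℕ) (r : Fin (k + 1) → ℕ) (z : Fin (k + 2) → ℕ) : ℕ :=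
  z 0 * n + ∑ i : Fin (k + 1), z i.succ * (n + r i)

/-- Two factorizations of `β` lie in the same connected component of the factorization
graph `∇_β`: there is a path of factorizations of `β`, consecutive ones sharing a
common positive coordinate. -/
def SameComp {m : ℕ} (π : (Fin m → ℕ) → ℕ) (β : ℕ) :
    (Fin m → ℕ) → (Fin m → ℕ) → Prop :=
  Relation.ReflTransGen (fun a b => π a = β ∧ π b = β ∧ ∃ i, 0 < a i ∧ 0 < b i)

/-- `β` is a Betti element: its factorization graph is disconnected. -/
def IsBetti {m : ℕ} (π : (Fin m → ℕ) → ℕ) (β : ℕ) : Prop :=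
  ∃ z z', π z = β ∧ π z' = β ∧ ¬ SameComp π β z z'

/-- The map `Φ_n` on pairs of factorizations. -/
def Phi (k : ℕ) (p : (Fin (k + 2) → ℕ) × (Fin (k + 2) → ℕ)) :
    (Fin (k + 2) → ℕ) × (Fin (k + 2) → ℕ) :=
  if vlen p.2 < vlen p.1 then
    (p.1 + (vlen p.1 - vlen p.2) • Pi.single (0 : Fin (k + 2)) 1,
     p.2 + (vlen p.1 - vlen p.2) • Pi.single (Fin.last (k + 1)) 1)
  else if vlen p.1 < vlen p.2 then
    (p.1 + (vlen p.2 - vlen p.1) • Pi.single (Fin.last (k + 1)) 1,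
     p.2 + (vlen p.2 - vlen p.1) • Pi.single (0 : Fin (k + 2)) 1)
  else p

/-- The congruence generated by a set of relations `ρ`. -/
inductive CongGen {m : ℕ} (ρ : Set ((Fin m → ℕ) × (Fin m → ℕ))) :
    (Fin m → ℕ) → (Fin m → ℕ) → Prop
  | of {z z'} : (z, z') ∈ ρ → CongGen ρ z z'
  | refl (z) : CongGen ρ z z
  | symm {z z'} : CongGen ρ z z' → CongGen ρ z' z
  | trans {x y z} : CongGen ρ x y → CongGen ρ y z → CongGen ρ x z
  | add {z z'} (u) : CongGen ρ z z' → CongGen ρ (z + u) (z' + u)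

/-- `ρ` is a presentation for the monoid with factorization homomorphism `π`. -/
def IsPres {m : ℕ} (π : (Fin m → ℕ) → ℕ)
    (ρ : Set ((Fin m → ℕ) × (Fin m → ℕ))) : Prop :=
  (∀ p ∈ ρ, π p.1 = π p.2) ∧ ∀ z z', CongGen ρ z z' ↔ π z = π z'

/-- `ρ` is a minimal presentation. -/
def IsMinPres {m : ℕ} (π : (Fin m → ℕ) → ℕ)
    (ρ : Set ((Fin m → ℕ) × (Fin m → ℕ))) : Prop :=
  IsPres π ρ ∧ ∀ ρ' ⊆ ρ, IsPres π ρ' → ρ' = ρ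

/-- Primitivity of `M_n`: the gcd of the generators is 1. -/
def Primitive (k n : ℕ) (r : Fin (k + 1) → ℕ) : Prop :=
  Nat.gcd n (Finset.univ.gcd fun i : Fin (k + 1) => n + r i) = 1

/-- Distance between two factorizations. -/
def fdist {m : ℕ} (z z' : Fin m → ℕ) : ℕ :=
  max (∑ i, (z i - min (z i) (z' i))) (∑ i, (z' i - min (z i) (z' i)))


/- ### Auxiliary lemmas ### -/


lemma bezout_aux (a b : ℕ) (ha : 0 < a) : ∃ x y : ℕ, x * a = Nat.gcd a b + y * b := by
  rcases Nat.eq_zero_or_pos b with hb | hb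
  · exact ⟨1, 0, by simp [hb]⟩
  · set A := Nat.gcdA a b with hA
    set B := Nat.gcdB a b with hB
    have hg : (Nat.gcd a b : ℤ) = a * A + b * B := Nat.gcd_eq_gcd_ab a b
    set x' : ℤ := A % b + b with hx'
    have hbz : (0:ℤ) < b := by exact_mod_cast hb
    have hx0 : 1 ≤ x' := by
      have := Int.emod_nonneg A (ne_of_gt hbz)
      omega
    set y' : ℤ := a - a * (A / b) - B with hy'
    have hkey : x' * a = (Nat.gcd a b : ℤ) + b * y' := by
      have hAm : A % b = A - b * (A / b) := by rw [Int.emod_def]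
      rw [hx', hAm, hy', hg]; ring
    have haz : (1:ℤ) ≤ a := by exact_mod_cast ha
    have hga : (Nat.gcd a b : ℤ) ≤ a := by exact_mod_cast Nat.gcd_le_left b ha
    have hy0 : 0 ≤ y' := by
      have h1 : (Nat.gcd a b : ℤ) ≤ x' * a := by nlinarith
      nlinarith
    refine ⟨x'.toNat, y'.toNat, ?_⟩
    have h1 : (x'.toNat : ℤ) = x' := Int.toNat_of_nonneg (by omega)
    have h2 : (y'.toNat : ℤ) = y' := Int.toNat_of_nonneg hy0
    have : (x'.toNat : ℤ) * a = (Nat.gcd a b : ℤ) + (y'.toNat : ℤ) * b := by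
      rw [h1, h2, hkey]; ring
    exact_mod_cast this

lemma gcd_bezout {ι : Type*} [DecidableEq ι] (s : Finset ι) (r : ι → ℕ) :
    ∃ f g : ι → ℕ, s.gcd r + ∑ i ∈ s, g i * r i = ∑ i ∈ s, f i * r i := by
  induction s using Finset.induction_on with
  | empty => exact ⟨0, 0, by simp⟩
  | @insert a s ha IH =>
    obtain ⟨f, g, hfg⟩ := IH
    have hgi : (insert a s).gcd r = Nat.gcd (r a) (s.gcd r) := Finset.gcd_insert
    rcases Nat.eq_zero_or_pos (r a) with h0 | h0
    · refine ⟨fun i => if i = a then 0 else f i, fun i => if i = a then 0 else g i, ?_⟩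
      rw [hgi, Finset.sum_insert ha, Finset.sum_insert ha]
      beta_reduce
      rw [if_pos rfl, if_pos rfl, h0, Nat.gcd_zero_left]
      have e1 : ∑ i ∈ s, (if i = a then 0 else f i) * r i = ∑ i ∈ s, f i * r i :=
        Finset.sum_congr rfl fun i hi => by rw [if_neg (ne_of_mem_of_not_mem hi ha)]
      have e2 : ∑ i ∈ s, (if i = a then 0 else g i) * r i = ∑ i ∈ s, g i * r i :=
        Finset.sum_congr rfl fun i hi => by rw [if_neg (ne_of_mem_of_not_mem hi ha)]
      rw [e1, e2]; omega
    · obtain ⟨x, y, hxy⟩ := bezout_aux (r a) (s.gcd r) h0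
      refine ⟨fun i => if i = a then x else y * g i, fun i => if i = a then 0 else y * f i, ?_⟩
      rw [hgi, Finset.sum_insert ha, Finset.sum_insert ha]
      beta_reduce
      rw [if_pos rfl, if_pos rfl]
      have e1 : ∑ i ∈ s, (if i = a then x else y * g i) * r i = y * ∑ i ∈ s, g i * r i := by
        rw [Finset.mul_sum]
        exact Finset.sum_congr rfl fun i hi => by
          rw [if_neg (ne_of_mem_of_not_mem hi ha)]; ring
      have e2 : ∑ i ∈ s, (if i = a then 0 else y * f i) * r i = y * ∑ i ∈ s, f i * r i := by
        rw [Finset.mul_sum]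
        exact Finset.sum_congr rfl fun i hi => by
          rw [if_neg (ne_of_mem_of_not_mem hi ha)]; ring
      rw [e1, e2]
      have h3 : y * (s.gcd r) + y * ∑ i ∈ s, g i * r i = y * ∑ i ∈ s, f i * r i := by
        rw [← Nat.mul_add, hfg]
      linarith

lemma count_sum_len {k : ℕ} (l : List (Fin (k+1))) : (∑ i, l.count i) = l.length := by
  induction l with
  | nil => simp
  | cons a t IH =>
    simp only [List.count_cons, beq_iff_eq, List.length_cons]
    rw [Finset.sum_add_distrib, IH, Finset.sum_ite_eq Finset.univ a (fun _ => 1)]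
    simp

lemma count_sum_weight {k : ℕ} (r : Fin (k+1) → ℕ) (l : List (Fin (k+1))) :
    (∑ i, l.count i * r i) = (l.map r).sum := by
  induction l with
  | nil => simp
  | cons a t IH =>
    simp only [List.count_cons, beq_iff_eq, List.map_cons, List.sum_cons]
    have e : ∀ i : Fin (k+1), (t.count i + if a = i then 1 else 0) * r i
        = t.count i * r i + (if a = i then r i else 0) := by
      intro i
      by_cases h : a = i
      · rw [if_pos h, if_pos h]; ring
      · rw [if_neg h, if_neg h]; ring
    simp only [e]
    rw [Finset.sum_add_distrib, IH, Finset.sum_ite_eq Finset.univ a (fun i => r i)]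
    simp [Nat.add_comm]

lemma combo_to_list {k : ℕ} (r : Fin (k+1) → ℕ) (c : Fin (k+1) → ℕ) :
    ∃ l : List (Fin (k+1)), (l.map r).sum = ∑ i, c i * r i := by
  have aux : ∀ L : List (Fin (k+1)), ∃ l : List (Fin (k+1)),
      (l.map r).sum = (L.map (fun i => c i * r i)).sum := by
    intro L
    induction L with
    | nil => exact ⟨[], rfl⟩
    | cons a T IH =>
      obtain ⟨l, hl⟩ := IH
      refine ⟨List.replicate (c a) a ++ l, ?_⟩
      simp [List.map_append, List.sum_append, List.map_replicate, List.sum_replicate, hl,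
        smul_eq_mul]
  obtain ⟨l, hl⟩ := aux (List.finRange (k+1))
  exact ⟨l, by rw [hl, ← Fin.sum_univ_def]⟩

lemma exists_small_combo (k : ℕ) (r : Fin (k+1) → ℕ) (hρ : 0 < r (Fin.last k))
    (N : ℕ) (hdN : Finset.univ.gcd r ∣ N) :
    ∃ c : Fin (k+1) → ℕ, c (Fin.last k) = 0 ∧
      Finset.univ.gcd r * ((∑ i, c i) + 1) ≤ r (Fin.last k) ∧
      (∑ i, c i * r i) ≡ N [MOD r (Fin.last k)] := by
  have hdρ : Finset.univ.gcd r ∣ r (Fin.last k) := Finset.gcd_dvd (Finset.mem_univ _)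
  have hdr : ∀ i, Finset.univ.gcd r ∣ r i := fun i => Finset.gcd_dvd (Finset.mem_univ _)
  have hd0 : 0 < Finset.univ.gcd r := Nat.pos_of_dvd_of_pos hdρ hρ
  set d := Finset.univ.gcd r with hd
  set ρ := r (Fin.last k) with hρdef
  -- base combination
  obtain ⟨f, g, hfg⟩ := gcd_bezout (Finset.univ : Finset (Fin (k+1))) r
  obtain ⟨t, rfl⟩ := hdN
  have hbase : ∃ l : List (Fin (k+1)), ((l.map r).sum) ≡ d * t [MOD ρ] := by
    obtain ⟨l, hl⟩ := combo_to_list r (fun i => t * f i + (ρ - 1) * (t * g i))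
    refine ⟨l, ?_⟩
    have hsum : (l.map r).sum
        = t * (∑ i, f i * r i) + (ρ - 1) * (t * ∑ i, g i * r i) := by
      rw [hl]
      simp_rw [add_mul, mul_assoc]
      rw [Finset.sum_add_distrib, ← Finset.mul_sum, ← Finset.mul_sum, ← Finset.mul_sum]
    have hval : (l.map r).sum = d * t + ρ * (t * ∑ i, g i * r i) := by
      rw [hsum, ← hfg]
      obtain ⟨p, hp⟩ : ∃ p, ρ = p + 1 := ⟨ρ - 1, by omega⟩
      rw [hp]
      simp only [Nat.add_sub_cancel]
      ring
    show (l.map r).sum % ρ = (d * t) % ρ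
    rw [hval, Nat.add_mul_mod_self_left]
  obtain ⟨l0, hl0⟩ := hbase
  -- shrink
  have shrink : ∀ len (l : List (Fin (k+1))), l.length = len →
      ((l.map r).sum) ≡ d * t [MOD ρ] →
      ∃ l' : List (Fin (k+1)), ((l'.map r).sum) ≡ d * t [MOD ρ] ∧
        (∀ x ∈ l', x ≠ Fin.last k) ∧ d * (l'.length + 1) ≤ ρ := by
    intro len
    induction len using Nat.strong_induction_on with
    | _ len IH =>
      intro l hlen hmod
      by_cases hlast : Fin.last k ∈ l
      · have hperm : l.Perm (Fin.last k :: l.erase (Fin.last k)) := List.perm_cons_erase hlast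
        have hsum : (l.map r).sum = ρ + ((l.erase (Fin.last k)).map r).sum := by
          have h1 := (hperm.map r).sum_eq
          simpa using h1
        have hlen' : (l.erase (Fin.last k)).length = len - 1 := by
          rw [List.length_erase_of_mem hlast, hlen]
        have hpos : 0 < len := by
          rw [← hlen]; exact List.length_pos_iff.mpr (List.ne_nil_of_mem hlast)
        refine IH (len - 1) (by omega) _ hlen' ?_
        refine Nat.ModEq.trans ?_ hmod
        show _ % ρ = _ % ρ
        rw [hsum, Nat.add_mod_left]
      · by_cases hsmall : d * (l.length + 1) ≤ ρ
        · exact ⟨l, hmod, fun x hx hxe => hlast (hxe ▸ hx), hsmall⟩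
        · have hρd : ρ / d ≤ len := by
            by_contra h
            push_neg at h
            have h2 : d * (len + 1) ≤ d * (ρ / d) := Nat.mul_le_mul_left d (by omega)
            rw [Nat.mul_div_cancel' hdρ] at h2
            exact hsmall (by rw [hlen]; exact h2)
          set D : Finset ℕ := (Finset.range ρ).filter (fun x => d ∣ x) with hD
          have hDcard : D.card ≤ ρ / d := by
            have hsub : D ⊆ (Finset.range (ρ / d)).image (· * d) := by
              intro x hx
              simp only [hD, Finset.mem_filter, Finset.mem_range] at hx
              obtain ⟨u, hu⟩ := hx.2
              refine Finset.mem_image.mpr ⟨u, Finset.mem_range.mpr ?_, by rw [hu]; ring⟩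
              by_contra h
              push_neg at h
              have h2 : d * (ρ / d) ≤ d * u := Nat.mul_le_mul_left d h
              rw [Nat.mul_div_cancel' hdρ] at h2
              omega
            calc D.card ≤ _ := Finset.card_le_card hsub
              _ ≤ (Finset.range (ρ / d)).card := Finset.card_image_le
              _ = ρ / d := Finset.card_range _
          have hmaps : ∀ j ∈ Finset.range (len + 1), ((l.take j).map r).sum % ρ ∈ D := by
            intro j _
            simp only [hD, Finset.mem_filter, Finset.mem_range]
            refine ⟨Nat.mod_lt _ hρ, ?_⟩
            rw [Nat.dvd_mod_iff hdρ]
            refine List.dvd_sum fun x hx => ?_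
            obtain ⟨i, _, rfl⟩ := List.mem_map.mp hx
            exact hdr i
          have hcard : D.card < (Finset.range (len + 1)).card := by
            rw [Finset.card_range]; omega
          obtain ⟨j1, hj1, j2, hj2, hne, heq⟩ :=
            Finset.exists_ne_map_eq_of_card_lt_of_maps_to hcard hmaps
          obtain ⟨a, b, hab, hbmem, habeq⟩ : ∃ a b, a < b ∧ b < len + 1 ∧
              ((l.take a).map r).sum % ρ = ((l.take b).map r).sum % ρ := by
            rcases Nat.lt_or_ge j1 j2 with h | h
            · exact ⟨j1, j2, h, Finset.mem_range.mp hj2, heq⟩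
            · exact ⟨j2, j1, by omega, Finset.mem_range.mp hj1, heq.symm⟩
          have hsplit : l.take b = l.take a ++ ((l.take b).drop a) := by
            conv_lhs => rw [← List.take_append_drop a (l.take b)]
            rw [List.take_take, min_eq_left hab.le]
          have hAB : ((l.take b).map r).sum
              = ((l.take a).map r).sum + (((l.take b).drop a).map r).sum := by
            conv_lhs => rw [hsplit]
            rw [List.map_append, List.sum_append]
          have htot : (l.map r).sum = ((l.take b).map r).sum + ((l.drop b).map r).sum := by
            conv_lhs => rw [← List.take_append_drop b l]
            rw [List.map_append, List.sum_append]
          have hdvdseg : ρ ∣ (((l.take b).drop a).map r).sum := by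
            have h4 : ((l.take a).map r).sum ≡ ((l.take a).map r).sum
                + (((l.take b).drop a).map r).sum [MOD ρ] := by
              rw [← hAB]; exact habeq
            have h5 := (Nat.modEq_iff_dvd' (Nat.le_add_right _ _)).mp h4
            rwa [Nat.add_sub_cancel_left] at h5
          set l' := l.take a ++ l.drop b with hl'
          have hsum' : (l'.map r).sum + (((l.take b).drop a).map r).sum = (l.map r).sum := by
            rw [hl', List.map_append, List.sum_append, htot, hAB]; ring
          have hmod' : (l'.map r).sum ≡ d * t [MOD ρ] := by
            have h5 : (l'.map r).sum ≡ (l'.map r).sum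
                + (((l.take b).drop a).map r).sum [MOD ρ] := by
              refine (Nat.modEq_iff_dvd' (Nat.le_add_right _ _)).mpr ?_
              rwa [Nat.add_sub_cancel_left]
            have h6 : (l'.map r).sum + (((l.take b).drop a).map r).sum
                ≡ d * t [MOD ρ] := by rw [hsum']; exact hmod
            exact h5.trans h6
          have hlen' : l'.length < len := by
            rw [hl', List.length_append, List.length_take, List.length_drop, hlen]
            have hb : b ≤ len := by omega
            have ha2 : a < len := by omega
            rw [min_eq_left (by omega : a ≤ len)]
            omega
          exact IH l'.length hlen' l' rfl hmod'
  obtain ⟨l', hm', hnl', hlen'⟩ := shrink l0.length l0 rfl hl0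
  refine ⟨fun i => l'.count i, ?_, ?_, ?_⟩
  · exact List.count_eq_zero.mpr fun h => hnl' _ h rfl
  · rw [count_sum_len]; exact hlen'
  · rw [count_sum_weight]; exact hm'

lemma piM_eq (k n : ℕ) (r : Fin (k+1) → ℕ) (z : Fin (k+2) → ℕ) :
    piM k n r z = vlen z * n + ∑ i : Fin (k+1), z i.succ * r i := by
  unfold piM vlen
  rw [Fin.sum_univ_succ (f := fun i => z i)]
  simp_rw [mul_add]
  rw [Finset.sum_add_distrib, add_mul, Finset.sum_mul]
  ring

lemma connect (k n : ℕ) (r : Fin (k+1) → ℕ) (hmono : StrictMono r) (hpos : 0 < r 0)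
    (hn : r (Fin.last k) ^ 2 < n)
    (β : ℕ) (z z' : Fin (k+2) → ℕ) (hz : piM k n r z = β) (hz' : piM k n r z' = β)
    (hge : vlen z' + 2 * Finset.univ.gcd r ≤ vlen z) :
    SameComp (piM k n r) β z z' := by
  have hdρ : Finset.univ.gcd r ∣ r (Fin.last k) := Finset.gcd_dvd (Finset.mem_univ _)
  have hdr : ∀ i, Finset.univ.gcd r ∣ r i := fun i => Finset.gcd_dvd (Finset.mem_univ _)
  have hρ : 0 < r (Fin.last k) := lt_of_lt_of_le hpos (hmono.monotone (Fin.zero_le _))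
  have hd0 : 0 < Finset.univ.gcd r := Nat.pos_of_dvd_of_pos hdρ hρ
  have hrle : ∀ i, r i ≤ r (Fin.last k) := fun i => hmono.monotone (Fin.le_last i)
  have hnρ : r (Fin.last k) * r (Fin.last k) < n := by rw [← pow_two]; exact hn
  have hn0 : 0 < n := lt_of_le_of_lt (Nat.zero_le _) hnρ
  have e1 : vlen z * n + (∑ i : Fin (k+1), z i.succ * r i) = β := by
    rw [← piM_eq]; exact hz
  have e2 : vlen z' * n + (∑ i : Fin (k+1), z' i.succ * r i) = β := by
    rw [← piM_eq]; exact hz'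
  have hdw' : Finset.univ.gcd r ∣ (∑ i : Fin (k+1), z' i.succ * r i) :=
    Finset.dvd_sum fun i _ => (hdr i).mul_left _
  have hw'le : (∑ i : Fin (k+1), z' i.succ * r i) ≤ vlen z' * r (Fin.last k) := by
    have h1 : (∑ i : Fin (k+1), z' i.succ * r i) ≤ ∑ i : Fin (k+1), z' i.succ * r (Fin.last k) :=
      Finset.sum_le_sum fun i _ => Nat.mul_le_mul_left _ (hrle i)
    have h2 : ∑ i : Fin (k+1), z' i.succ * r (Fin.last k)
        = (∑ i : Fin (k+1), z' i.succ) * r (Fin.last k) := (Finset.sum_mul _ _ _).symm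
    have h3 : ∑ i : Fin (k+1), z' i.succ ≤ vlen z' := by
      have h4 : vlen z' = z' 0 + ∑ i : Fin (k+1), z' i.succ :=
        Fin.sum_univ_succ (f := fun i => z' i)
      omega
    calc (∑ i : Fin (k+1), z' i.succ * r i) ≤ _ := h1
      _ = _ := h2
      _ ≤ vlen z' * r (Fin.last k) := Nat.mul_le_mul_right _ h3
  have hex1 : 0 < (∑ i : Fin (k+1), z' i.succ * r i) → ∃ i : Fin (k+1), 0 < z' i.succ := by
    intro hpos'
    by_contra h
    push_neg at h
    have hz0 : (∑ i : Fin (k+1), z' i.succ * r i) = 0 :=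
      Finset.sum_eq_zero fun i _ => by simp [Nat.le_zero.mp (h i)]
    omega
  have hex2 : 0 < vlen z → ∃ j : Fin (k+1), 0 < z j.succ ∨ 0 < z 0 := by
    intro hzpos
    by_cases hj : ∃ j : Fin (k+1), 0 < z j.succ
    · obtain ⟨j, h⟩ := hj; exact ⟨j, Or.inl h⟩
    · push_neg at hj
      refine ⟨0, Or.inr ?_⟩
      have h1 : vlen z = z 0 + ∑ i : Fin (k+1), z i.succ :=
        Fin.sum_univ_succ (f := fun i => z i)
      have h2 : ∑ i : Fin (k+1), z i.succ = 0 :=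
        Finset.sum_eq_zero fun i _ => by have := hj i; omega
      omega
  set d := Finset.univ.gcd r with hd
  set ρ := r (Fin.last k) with hρdef
  set w := ∑ i : Fin (k+1), z i.succ * r i with hw
  set w' := ∑ i : Fin (k+1), z' i.succ * r i with hw'
  set L := vlen z with hL
  set L' := vlen z' with hL'
  clear_value d ρ w w' L L'
  obtain ⟨m, hm⟩ : ∃ m, L' + m = L := Nat.le.dest (by omega)
  have hm2 : 2 * d ≤ m := by omega
  have key : m * n + w = w' := by
    have h1 : (L' + m) * n = L' * n + m * n := add_mul _ _ _
    rw [hm] at h1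
    linarith only [e1, e2, h1]
  have hw2 : d * n + d * n ≤ w' := by
    have h1 : (2 * d) * n ≤ m * n := Nat.mul_le_mul_right n hm2
    have h2 : (2 * d) * n = d * n + d * n := by ring
    linarith only [h1, h2, key, Nat.zero_le w]
  have hnn : n ≤ d * n := Nat.le_mul_of_pos_left n hd0
  obtain ⟨N, hNdef⟩ : ∃ N, d * n + N = w' := Nat.le.dest (by linarith only [hw2, hnn, hn0])
  have hNn : n ≤ N := by
    have h1 : d * n + d * n ≤ d * n + N := by linarith only [hw2, hNdef]
    have h2 : d * n ≤ N := Nat.le_of_add_le_add_left h1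
    linarith only [h2, hnn]
  have hdN : d ∣ N := by
    have h1 : d ∣ d * n + N := by rw [hNdef]; exact hdw'
    exact (Nat.dvd_add_right (dvd_mul_right d n)).mp h1
  obtain ⟨i0, hi0⟩ : ∃ i : Fin (k+1), 0 < z' i.succ := by
    refine hex1 ?_
    have h5 : 0 < d * n := Nat.mul_pos hd0 hn0
    linarith only [h5, hw2]
  obtain ⟨j0, hj0⟩ : ∃ j : Fin (k+1), 0 < z j.succ ∨ 0 < z 0 := by
    refine hex2 ?_
    omega
  have h2ρ : r i0 + r j0 ≤ ρ + ρ := add_le_add (hrle i0) (hrle j0)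
  have hsq : ∀ q : ℕ, 0 < q → (q-1)*(q-1) + (q+q) = q*q + 1 := by
    intro q hq
    obtain ⟨p, rfl⟩ : ∃ p, q = p + 1 := ⟨q - 1, by omega⟩
    simp only [Nat.add_sub_cancel]
    ring
  have hsqρ := hsq ρ hρ
  have hρρ : ρ + ρ ≤ ρ * ρ + 1 := by nlinarith only [hsqρ]
  obtain ⟨N'', hN''⟩ : ∃ N'', (r i0 + r j0) + N'' = N :=
    Nat.le.dest (by linarith only [h2ρ, hρρ, hnρ, hNn])
  have hN''ge : (ρ-1)*(ρ-1) ≤ N'' := by linarith only [hsqρ, h2ρ, hnρ, hNn, hN'']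
  have hdN'' : d ∣ N'' := by
    have h1 : d ∣ (r i0 + r j0) + N'' := by rw [hN'']; exact hdN
    exact (Nat.dvd_add_right (dvd_add (hdr i0) (hdr j0))).mp h1
  have hρ' : 0 < r (Fin.last k) := by rw [← hρdef]; exact hρ
  have hdN''' : Finset.univ.gcd r ∣ N'' := by rw [← hd]; exact hdN''
  obtain ⟨c, hclast, hcbound, hcmod⟩ := exists_small_combo k r hρ' N'' hdN'''
  rw [← hρdef] at hcbound hcmod
  rw [← hd] at hcbound
  set s := ∑ i, c i * r i with hs
  have hSc : (∑ i, c i) + 1 ≤ ρ := le_trans (Nat.le_mul_of_pos_left _ hd0) hcbound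
  have hsle : s ≤ (∑ i, c i) * (ρ - 1) := by
    rw [hs, Finset.sum_mul]
    refine Finset.sum_le_sum fun i _ => ?_
    rcases Nat.eq_zero_or_pos (c i) with h | h
    · simp [h]
    · have hne : i ≠ Fin.last k := fun he => by rw [he, hclast] at h; omega
      have hlt : i < Fin.last k := lt_of_le_of_ne (Fin.le_last i) hne
      have h6 : r i < ρ := by rw [hρdef]; exact hmono hlt
      exact Nat.mul_le_mul_left _ (by omega)
  have hs2 : s ≤ (ρ-1)*(ρ-1) :=
    le_trans hsle (Nat.mul_le_mul_right _ (by omega))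
  have hsN'' : s ≤ N'' := le_trans hs2 hN''ge
  obtain ⟨q, hq0⟩ := (Nat.modEq_iff_dvd' hsN'').mp hcmod
  have hq : ρ * q + s = N'' := by rw [← hq0]; exact Nat.sub_add_cancel hsN''
  have hw'le' : w' ≤ L' * ρ := hw'le
  have ha4 : d * (ρ * ρ) + d ≤ d * n := by
    calc d * (ρ * ρ) + d = d * (ρ * ρ + 1) := by ring
      _ ≤ d * n := Nat.mul_le_mul_left _ (by omega)
  have ha5 : d * (∑ i, c i) * ρ + d * ρ ≤ ρ * ρ := by
    calc d * (∑ i, c i) * ρ + d * ρ = (d * ((∑ i, c i) + 1)) * ρ := by ring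
      _ ≤ ρ * ρ := Nat.mul_le_mul_right _ hcbound
  have ha6 : (∑ i, c i) * ρ ≤ d * (∑ i, c i) * ρ := by
    have := Nat.le_mul_of_pos_left ((∑ i, c i) * ρ) hd0
    rwa [← mul_assoc] at this
  have ha7 : ρ * ρ ≤ d * (ρ * ρ) := Nat.le_mul_of_pos_left _ hd0
  have ha8 : ρ ≤ d * ρ := Nat.le_mul_of_pos_left _ hd0
  have hgoal' : ((∑ i, c i) + q + 2) * ρ < (L' + 1) * ρ := by
    have hb1 : ρ * q ≤ N'' := by linarith only [hq]
    linarith only [hq, hN'', hNdef, hw'le', ha4, ha5, ha6, ha7, ha8, hb1, hd0, hρ,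
      Nat.zero_le s, Nat.zero_le (r i0 + r j0)]
  have hμ : (∑ i, c i) + q + 2 ≤ L' :=
    Nat.lt_succ_iff.mp (lt_of_mul_lt_mul_right hgoal' (Nat.zero_le ρ))
  clear_value s
  set y : Fin (k+2) → ℕ := Fin.cons (L' + d - ((∑ i, c i) + q + 2))
    (fun i => c i + (if i = Fin.last k then q else 0) + (if i = i0 then 1 else 0)
      + (if i = j0 then 1 else 0)) with hy
  have hy0 : y 0 = L' + d - ((∑ i, c i) + q + 2) := rfl
  have hysucc : ∀ i : Fin (k+1), y i.succ = c i + (if i = Fin.last k then q else 0)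
      + (if i = i0 then 1 else 0) + (if i = j0 then 1 else 0) := fun i => by
    rw [hy]; exact Fin.cons_succ _ _ i
  have hysum : ∑ i : Fin (k+1), y i.succ = (∑ i, c i) + q + 2 := by
    simp only [hysucc]
    rw [Finset.sum_add_distrib, Finset.sum_add_distrib, Finset.sum_add_distrib,
      Finset.sum_ite_eq' Finset.univ (Fin.last k) (fun _ => q),
      Finset.sum_ite_eq' Finset.univ i0 (fun _ => 1),
      Finset.sum_ite_eq' Finset.univ j0 (fun _ => 1)]
    simp
  have hyw : ∑ i : Fin (k+1), y i.succ * r i = s + ρ * q + (r i0 + r j0) := by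
    simp only [hysucc, add_mul, ite_mul, zero_mul, one_mul]
    rw [Finset.sum_add_distrib, Finset.sum_add_distrib, Finset.sum_add_distrib,
      Finset.sum_ite_eq' Finset.univ (Fin.last k) (fun i => q * r i),
      Finset.sum_ite_eq' Finset.univ i0 (fun i => r i),
      Finset.sum_ite_eq' Finset.univ j0 (fun i => r i)]
    simp only [Finset.mem_univ, if_true]
    rw [hs, ← hρdef]
    ring
  have hvy : vlen y = L' + d := by
    have h1 : vlen y = y 0 + ∑ i : Fin (k+1), y i.succ :=
      Fin.sum_univ_succ (f := fun i => y i)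
    rw [h1, hy0, hysum]
    omega
  have hpiy : piM k n r y = β := by
    rw [piM_eq, hvy, hyw]
    have h1 : (L' + d) * n = L' * n + d * n := add_mul _ _ _
    linarith only [hq, hN'', hNdef, e2, h1]
  have hyi0 : 0 < y i0.succ := by
    rw [hysucc i0, if_pos rfl]
    omega
  have hyj0 : 0 < y j0.succ := by
    rw [hysucc j0, if_pos rfl]
    omega
  have hy0pos : 0 < y 0 := by
    rw [hy0]; omega
  have step1 : piM k n r z = β ∧ piM k n r y = β ∧ ∃ i, 0 < z i ∧ 0 < y i := by
    refine ⟨hz, hpiy, ?_⟩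
    rcases hj0 with h | h
    · exact ⟨j0.succ, h, hyj0⟩
    · exact ⟨0, h, hy0pos⟩
  have step2 : piM k n r y = β ∧ piM k n r z' = β ∧ ∃ i, 0 < y i ∧ 0 < z' i :=
    ⟨hpiy, hz', i0.succ, hyi0, hi0⟩
  exact Relation.ReflTransGen.head step1 (Relation.ReflTransGen.single step2)

lemma sameComp_symm {m : ℕ} {π : (Fin m → ℕ) → ℕ} {β : ℕ} {a b : Fin m → ℕ}
    (h : SameComp π β a b) : SameComp π β b a := by
  refine @Std.Symm.symm _ _ (@Relation.ReflTransGen.symmetric _ _ ⟨?_⟩) _ _ h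
  rintro x y ⟨h1, h2, i, hx, hy⟩
  exact ⟨h2, h1, i, hy, hx⟩

lemma core (k n : ℕ) (r : Fin (k + 1) → ℕ) (hmono : StrictMono r) (hpos : 0 < r 0)
    (hn : r (Fin.last k) ^ 2 < n) (hprim : Primitive k n r)
    (β : ℕ) (z z' : Fin (k + 2) → ℕ) (hz : piM k n r z = β) (hz' : piM k n r z' = β)
    (hcomp : ¬ SameComp (piM k n r) β z z') (hle : vlen z' ≤ vlen z) :
    vlen z = vlen z' ∨ vlen z = vlen z' + Finset.univ.gcd r := by
  have hdr : ∀ i, Finset.univ.gcd r ∣ r i := fun i => Finset.gcd_dvd (Finset.mem_univ _)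
  have hρ : 0 < r (Fin.last k) := lt_of_lt_of_le hpos (hmono.monotone (Fin.zero_le _))
  have hd0 : 0 < Finset.univ.gcd r :=
    Nat.pos_of_dvd_of_pos (Finset.gcd_dvd (Finset.mem_univ (Fin.last k))) hρ
  set d := Finset.univ.gcd r with hd
  have e1 : vlen z * n + (∑ i : Fin (k+1), z i.succ * r i) = β := by
    rw [← piM_eq]; exact hz
  have e2 : vlen z' * n + (∑ i : Fin (k+1), z' i.succ * r i) = β := by
    rw [← piM_eq]; exact hz'
  have hdw : d ∣ (∑ i : Fin (k+1), z i.succ * r i) :=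
    Finset.dvd_sum fun i _ => (hdr i).mul_left _
  have hdw' : d ∣ (∑ i : Fin (k+1), z' i.succ * r i) :=
    Finset.dvd_sum fun i _ => (hdr i).mul_left _
  obtain ⟨m, hm⟩ : ∃ m, vlen z' + m = vlen z := Nat.le.dest hle
  have key : m * n + (∑ i : Fin (k+1), z i.succ * r i)
      = (∑ i : Fin (k+1), z' i.succ * r i) := by
    have h1 : (vlen z' + m) * n = vlen z' * n + m * n := add_mul _ _ _
    rw [hm] at h1
    linarith only [e1, e2, h1]
  have hdmn : d ∣ m * n := by
    have h1 : d ∣ m * n + (∑ i : Fin (k+1), z i.succ * r i) := key ▸ hdw'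
    have h2 := Nat.dvd_sub h1 hdw
    rwa [Nat.add_sub_cancel] at h2
  have hco : Nat.Coprime n d := by
    have h2 : Nat.gcd n d ∣ Nat.gcd n (Finset.univ.gcd fun i : Fin (k + 1) => n + r i) :=
      Nat.dvd_gcd (Nat.gcd_dvd_left n d)
        (Finset.dvd_gcd fun i _ =>
          dvd_add (Nat.gcd_dvd_left n d) ((Nat.gcd_dvd_right n d).trans (hdr i)))
    rw [hprim] at h2
    exact Nat.dvd_one.mp h2
  have hdm : d ∣ m := (Nat.Coprime.dvd_of_dvd_mul_right hco.symm) hdmn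
  rcases Nat.eq_zero_or_pos m with h0 | hmpos
  · left; omega
  · obtain ⟨u, rfl⟩ := hdm
    match u with
    | 0 => left; omega
    | 1 => right; omega
    | (u + 2) =>
      exfalso
      apply hcomp
      refine connect k n r hmono hpos hn β z z' hz hz' ?_
      have h3 : 2 * d ≤ d * (u + 2) := by nlinarith only [hd0]
      omega

/-- If `n > r_k²` and `M_n` is primitive, any two factorizations of a Betti element
lying in different connected components of its factorization graph have lengths
differing by `0` or `d = gcd(r_1,...,r_k)`. -/
theorem stmt5 (k n : ℕ) (r : Fin (k + 1) → ℕ) (hmono : StrictMono r) (hpos : 0 < r 0)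
    (hn : r (Fin.last k) ^ 2 < n) (hprim : Primitive k n r)
    (β : ℕ) (hB : IsBetti (piM k n r) β)
    (z z' : Fin (k + 2) → ℕ) (hz : piM k n r z = β) (hz' : piM k n r z' = β)
    (hcomp : ¬ SameComp (piM k n r) β z z') :
    ((vlen z : ℤ) - vlen z').natAbs = 0 ∨
      ((vlen z : ℤ) - vlen z').natAbs = Finset.univ.gcd r := by
  rcases le_total (vlen z') (vlen z) with h | h
  · rcases core k n r hmono hpos hn hprim β z z' hz hz' hcomp h with h1 | h1
    · left; omega
    · right; omega
  · rcases core k n r hmono hpos hn hprim β z' z hz' hz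
        (fun hc => hcomp (sameComp_symm hc)) h with h1 | h1
    · left; omega
    · right; omega
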